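/- Let A be a standard operator algebra on a dense subspace D and let (L, R) be a pair of additive maps L, R : A → A satisfying L(XY) = L(X)Y, R(XY) = X R(Y), and X L(Y) = R(X) Y for all X, Y ∈ A (a double centralizer). Then there exists a linear operator T : D → D with L(A) = TA and R(A) = AT for all A ∈ A. -/

import Mathlib

open scoped InnerProductSpace

noncomputable def rankOne {H : Type*} [NormedAddCommGroup H] [InnerProductSpace ℂ H]
    (D : Submodule ℂ H) (ψ φ : D) : D →ₗ[ℂ] D where
  toFun χ := (⟪(φ : H), (χ : H)⟫_ℂ) • ψ
  map_add' x y := by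
    simp [inner_add_right, add_smul]
  map_smul' c x := by
    simp [inner_smul_right, smul_smul]

def IsFiniteRankOp {H : Type*} [NormedAddCommGroup H] [InnerProductSpace ℂ H]
    (D : Submodule ℂ H) (F : D →ₗ[ℂ] D) : Prop :=
  F ∈ Submodule.span ℂ (Set.range fun p : D × D => rankOne D p.1 p.2)

def IsFormalAdjoint {H : Type*} [NormedAddCommGroup H] [InnerProductSpace ℂ H]
    (D : Submodule ℂ H) (A S : D →ₗ[ℂ] D) : Prop :=
  ∀ x y : D, ⟪((A x : D) : H), (y : H)⟫_ℂ = ⟪(x : H), ((S y : D) : H)⟫_ℂ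

def IsUnitaryOn {H : Type*} [NormedAddCommGroup H] [InnerProductSpace ℂ H]
    (D : Submodule ℂ H) (U : D →ₗ[ℂ] D) : Prop :=
  Function.Bijective U ∧
    ∀ x y : D, ⟪((U x : D) : H), ((U y : D) : H)⟫_ℂ = ⟪(x : H), (y : H)⟫_ℂ

def IsRankOneOp {H : Type*} [NormedAddCommGroup H] [InnerProductSpace ℂ H]
    (D : Submodule ℂ H) (F : D →ₗ[ℂ] D) : Prop :=
  ∃ ψ φ : D, ψ ≠ 0 ∧ φ ≠ 0 ∧ F = rankOne D ψ φ

theorem stmt5 {H : Type*} [NormedAddCommGroup H] [InnerProductSpace ℂ H]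
    (D : Submodule ℂ H) (hD : Dense (D : Set H))
    (A : Subalgebra ℂ (D →ₗ[ℂ] D)) (hstd : ∀ ψ φ : D, rankOne D ψ φ ∈ A)
    (L R : (D →ₗ[ℂ] D) → (D →ₗ[ℂ] D))
    (hLadd : ∀ X ∈ A, ∀ Y ∈ A, L (X + Y) = L X + L Y)
    (hRadd : ∀ X ∈ A, ∀ Y ∈ A, R (X + Y) = R X + R Y)
    (hL : ∀ X ∈ A, ∀ Y ∈ A, L (X ∘ₗ Y) = L X ∘ₗ Y)
    (hR : ∀ X ∈ A, ∀ Y ∈ A, R (X ∘ₗ Y) = X ∘ₗ R Y)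
    (hLR : ∀ X ∈ A, ∀ Y ∈ A, X ∘ₗ L Y = R X ∘ₗ Y) :
    ∃ T : D →ₗ[ℂ] D, ∀ A' ∈ A, L A' = T ∘ₗ A' ∧ R A' = A' ∘ₗ T := by
  by_cases htriv : ∀ ψ : D, ψ = 0
  · have hsub : Subsingleton D := ⟨fun a b => (htriv a).trans (htriv b).symm⟩
    exact ⟨0, fun A' _ => ⟨LinearMap.ext fun x => Subsingleton.elim _ _,
      LinearMap.ext fun x => Subsingleton.elim _ _⟩⟩
  · push_neg at htriv
    obtain ⟨φ, hφ⟩ := htriv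
    set φ₀ : D := (‖(φ : H)‖⁻¹ : ℂ) • φ with hφ₀def
    have hφH : (φ : H) ≠ 0 := fun h => hφ (Subtype.ext h)
    have hφ1 : ⟪((φ₀ : D) : H), ((φ₀ : D) : H)⟫_ℂ = 1 := by
      have hn : ‖(φ : H)‖ ≠ 0 := norm_ne_zero_iff.mpr hφH
      have hn : (‖(φ : H)‖ : ℂ) ≠ 0 := by
        exact_mod_cast norm_ne_zero_iff.mpr hφH
      have hco : ((φ₀ : D) : H) = (‖(φ : H)‖⁻¹ : ℂ) • (φ : H) := rfl
      rw [hco, inner_smul_left, inner_smul_right, inner_self_eq_norm_sq_to_K]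
      simp only [map_inv₀, Complex.conj_ofReal]
      field_simp
      norm_cast
    have hE0 : (rankOne D φ₀ φ₀) φ₀ = φ₀ := by
      simp [rankOne, hφ1, -inner_self_eq_norm_sq_to_K]
    -- key identities on rankOne
    have hro_add : ∀ x y : D, rankOne D (x + y) φ₀ = rankOne D x φ₀ + rankOne D y φ₀ := by
      intro x y; ext χ; simp [rankOne, smul_add]
    have hro_smul : ∀ (c : ℂ) (x : D),
        rankOne D (c • x) φ₀ = rankOne D x φ₀ ∘ₗ (c • rankOne D φ₀ φ₀) := by
      intro c x; ext χ
      simp [rankOne, inner_smul_right, hφ1, smul_smul, mul_comm, -inner_self_eq_norm_sq_to_K]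
    have hro_comp : ∀ (A' : D →ₗ[ℂ] D) (x : D),
        rankOne D (A' x) φ₀ = A' ∘ₗ rankOne D x φ₀ := by
      intro A' x; ext χ; simp [rankOne]
    let T : D →ₗ[ℂ] D :=
      { toFun := fun ψ => L (rankOne D ψ φ₀) φ₀
        map_add' := by
          intro x y
          show L (rankOne D (x + y) φ₀) φ₀ =
            L (rankOne D x φ₀) φ₀ + L (rankOne D y φ₀) φ₀
          rw [hro_add, hLadd _ (hstd x φ₀) _ (hstd y φ₀)]
          simp
        map_smul' := by
          intro c x
          show L (rankOne D (c • x) φ₀) φ₀ = c • L (rankOne D x φ₀) φ₀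
          rw [hro_smul, hL _ (hstd x φ₀) _ (A.smul_mem (hstd φ₀ φ₀) c)]
          simp only [LinearMap.comp_apply, LinearMap.smul_apply, hE0, map_smul,
            RingHom.id_apply] }
    refine ⟨T, fun A' hA' => ⟨?_, ?_⟩⟩
    · refine LinearMap.ext fun ψ => ?_
      have := hL A' hA' _ (hstd ψ φ₀)
      calc (L A') ψ = (L A') ((rankOne D ψ φ₀) φ₀) := by simp [rankOne, hφ1, -inner_self_eq_norm_sq_to_K]
        _ = (L A' ∘ₗ rankOne D ψ φ₀) φ₀ := rfl
        _ = (L (A' ∘ₗ rankOne D ψ φ₀)) φ₀ := by rw [this]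
        _ = (L (rankOne D (A' ψ) φ₀)) φ₀ := by rw [hro_comp]
        _ = (T ∘ₗ A') ψ := rfl
    · refine LinearMap.ext fun ψ => ?_
      have := hLR A' hA' _ (hstd ψ φ₀)
      calc (R A') ψ = (R A') ((rankOne D ψ φ₀) φ₀) := by simp [rankOne, hφ1, -inner_self_eq_norm_sq_to_K]
        _ = (R A' ∘ₗ rankOne D ψ φ₀) φ₀ := rfl
        _ = (A' ∘ₗ L (rankOne D ψ φ₀)) φ₀ := by rw [this]
        _ = (A' ∘ₗ T) ψ := rfl
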